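/- Let d ∈ ℕ, d ≥ 1, and let E be a linear map on the d×d complex matrices that is trace-preserving and 2-positive, meaning that the map E ⊗ id₂, which applies E to each of the four d×d blocks of a 2d×2d matrix, sends positive semidefinite matrices to positive semidefinite matrices. Then F(σ, ρ) ≤ F(E(σ), E(ρ)) for all density matrices σ, ρ. -/

import Mathlib

open scoped ComplexOrder
open Matrix

open scoped Classical in
/-- The positive semidefinite square root of a positive semidefinite matrix
(junk value `0` if the matrix is not positive semidefinite). -/
noncomputable def matSqrt {d : ℕ} (M : Matrix (Fin d) (Fin d) ℂ) : Matrix (Fin d) (Fin d) ℂ :=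
  if h : M.PosSemidef then
    (h.1.eigenvectorUnitary : Matrix (Fin d) (Fin d) ℂ) *
      diagonal ((↑) ∘ Real.sqrt ∘ h.1.eigenvalues) *
      (star h.1.eigenvectorUnitary : Matrix (Fin d) (Fin d) ℂ)
  else 0

/-- The absolute value `|X| = (Xᴴ X)^{1/2}` of a matrix. -/
noncomputable def matAbs {d : ℕ} (X : Matrix (Fin d) (Fin d) ℂ) : Matrix (Fin d) (Fin d) ℂ :=
  matSqrt (Xᴴ * X)

/-- The fidelity `F(σ, ρ) = tr |σ^{1/2} ρ^{1/2}|` of two matrices, as a real number. -/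
noncomputable def matFid {d : ℕ} (σ ρ : Matrix (Fin d) (Fin d) ℂ) : ℝ :=
  ((matAbs (matSqrt σ * matSqrt ρ)).trace).re

set_option linter.unusedSectionVars false


section Gadget
variable {n : Type*} [Fintype n] [DecidableEq n]

lemma conj_diag_mul {V : Matrix n n ℂ} (hV : Vᴴ * V = 1) (f g : n → ℂ) :
    (V * diagonal f * Vᴴ) * (V * diagonal g * Vᴴ) = V * diagonal (fun i => f i * g i) * Vᴴ := by
  have h1 : (V * diagonal f * Vᴴ) * (V * diagonal g * Vᴴ)
      = V * diagonal f * (Vᴴ * V) * (diagonal g * Vᴴ) := by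
    simp only [Matrix.mul_assoc]
  rw [h1, hV, Matrix.mul_one, Matrix.mul_assoc V, Matrix.mul_assoc V,
    ← Matrix.mul_assoc (diagonal f), diagonal_mul_diagonal]

lemma conj_diag_conjTranspose {V : Matrix n n ℂ} (f : n → ℂ) (hf : ∀ i, star (f i) = f i) :
    (V * diagonal f * Vᴴ)ᴴ = V * diagonal f * Vᴴ := by
  rw [conjTranspose_mul, conjTranspose_mul, conjTranspose_conjTranspose, diagonal_conjTranspose]
  have : star f = f := funext hf
  rw [Pi.star_def] at this ⊢
  simp only [this, Matrix.mul_assoc]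

/-- Pseudoinverse gadget for PSD matrices. -/
lemma exists_pinv {S : Matrix n n ℂ} (hS : S.PosSemidef) :
    ∃ Sp Pr : Matrix n n ℂ, Spᴴ = Sp ∧ Prᴴ = Pr ∧ S * Sp = Pr ∧ Sp * S = Pr ∧
      Pr * S = S ∧ S * Pr = S ∧ Pr * Pr = Pr := by
  have h := hS.1
  set V : Matrix n n ℂ := (h.eigenvectorUnitary : Matrix n n ℂ) with hVdef
  have hV : Vᴴ * V = 1 := by
    simpa [star_eq_conjTranspose] using (Matrix.mem_unitaryGroup_iff').mp h.eigenvectorUnitary.2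
  set e := h.eigenvalues with he
  set F : n → ℂ := fun i => ((e i : ℝ) : ℂ) with hF
  set G : n → ℂ := fun i => (((e i)⁻¹ : ℝ) : ℂ) with hG
  set I : n → ℂ := fun i => if e i = 0 then 0 else 1 with hI
  have hspec : S = V * diagonal F * Vᴴ := by
    have := h.spectral_theorem
    rw [Unitary.conjStarAlgAut_apply, star_eq_conjTranspose, ← hVdef] at this
    exact this
  have hFG : ∀ i, F i * G i = I i := by
    intro i
    by_cases hi : e i = 0 <;> simp [hF, hG, hI, hi]
  have hGF : ∀ i, G i * F i = I i := fun i => by rw [mul_comm]; exact hFG i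
  have hIF : ∀ i, I i * F i = F i := by
    intro i; by_cases hi : e i = 0 <;> simp [hF, hI, hi]
  have hFI : ∀ i, F i * I i = F i := fun i => by rw [mul_comm]; exact hIF i
  have hII : ∀ i, I i * I i = I i := by
    intro i; by_cases hi : e i = 0 <;> simp [hI, hi]
  refine ⟨V * diagonal G * Vᴴ, V * diagonal I * Vᴴ, ?_, ?_, ?_, ?_, ?_, ?_, ?_⟩
  · exact conj_diag_conjTranspose G (fun i => by simp [hG, RCLike.star_def])
  · refine conj_diag_conjTranspose I (fun i => ?_)
    by_cases hi : e i = 0 <;> simp [hI, hi]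
  · rw [hspec, conj_diag_mul hV]; congr 1; · congr 1; exact congrArg diagonal (funext hFG)
  · rw [hspec, conj_diag_mul hV]; congr 1; · congr 1; exact congrArg diagonal (funext hGF)
  · rw [hspec, conj_diag_mul hV]; congr 1; · congr 1; exact congrArg diagonal (funext hIF)
  · rw [hspec, conj_diag_mul hV]; congr 1; · congr 1; exact congrArg diagonal (funext hFI)
  · rw [conj_diag_mul hV]; congr 1; · congr 1; exact congrArg diagonal (funext hII)

lemma psd_sqrt_facts {S : Matrix n n ℂ} (hS : S.PosSemidef) :
    ((hS.1.eigenvectorUnitary : Matrix n n ℂ) * diagonal (Complex.ofReal ∘ Real.sqrt ∘ hS.1.eigenvalues) *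
      (star hS.1.eigenvectorUnitary : Matrix n n ℂ)).PosSemidef ∧
    (hS.1.eigenvectorUnitary : Matrix n n ℂ) * diagonal (Complex.ofReal ∘ Real.sqrt ∘ hS.1.eigenvalues) *
      (star hS.1.eigenvectorUnitary : Matrix n n ℂ) *
    ((hS.1.eigenvectorUnitary : Matrix n n ℂ) * diagonal (Complex.ofReal ∘ Real.sqrt ∘ hS.1.eigenvalues) *
      (star hS.1.eigenvectorUnitary : Matrix n n ℂ)) = S := by
  set h := hS.1 with hh
  set V : Matrix n n ℂ := (h.eigenvectorUnitary : Matrix n n ℂ) with hVdef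
  have hstar : (star h.eigenvectorUnitary : Matrix n n ℂ) = Vᴴ := by
    rw [star_eq_conjTranspose]
  rw [hstar]
  have hV : Vᴴ * V = 1 := by
    simpa [star_eq_conjTranspose] using (Matrix.mem_unitaryGroup_iff').mp h.eigenvectorUnitary.2
  have hspec : S = V * diagonal (RCLike.ofReal ∘ h.eigenvalues) * Vᴴ := by
    have := h.spectral_theorem
    rw [Unitary.conjStarAlgAut_apply, hstar] at this
    exact this
  constructor
  · exact (posSemidef_diagonal_iff.mpr fun i => by
      simp [Complex.zero_le_real, Real.sqrt_nonneg]).mul_mul_conjTranspose_same V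
  · rw [conj_diag_mul hV]
    refine Eq.trans (congrArg (fun D => V * diagonal D * Vᴴ) ?_) hspec.symm
    funext i
    have hi : 0 ≤ h.eigenvalues i := hS.eigenvalues_nonneg i
    simp only [Function.comp_apply]
    rw [← Complex.ofReal_mul, Real.mul_self_sqrt hi]
    rfl

lemma psd_exists_conjTranspose_mul_self {S : Matrix n n ℂ} (hS : S.PosSemidef) :
    ∃ C : Matrix n n ℂ, S = Cᴴ * C := by
  obtain ⟨h1, h2⟩ := psd_sqrt_facts hS
  exact ⟨_, h2.symm.trans (congrArg (fun X => X * _) h1.1.eq.symm)⟩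

end Gadget


variable {m n : Type*} [Fintype m] [Fintype n] [DecidableEq n]

lemma dot_conj_mul (A : Matrix m n ℂ) (B : Matrix m n ℂ) (v : n → ℂ) :
    star v ⬝ᵥ ((Aᴴ * B) *ᵥ v) = star (A *ᵥ v) ⬝ᵥ (B *ᵥ v) := by
  rw [← mulVec_mulVec, dotProduct_mulVec, ← star_mulVec]

lemma sandwich_diag (V : Matrix n n ℂ) (M : Matrix n n ℂ) (j : n) :
    (Vᴴ * M * V) j j = star (fun i => V i j) ⬝ᵥ (M *ᵥ (fun i => V i j)) := by
  simp [Matrix.mul_apply, mulVec, dotProduct, conjTranspose_apply, Finset.mul_sum,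
    Finset.sum_mul, mul_assoc]
  rw [Finset.sum_comm]

/-- Contraction trace bound: if `Gᴴ G = H²` with `H` PSD and `U` is a contraction, then
`Re tr(Gᴴ U) ≤ Re tr H`. -/
lemma trace_re_conjTranspose_mul_le (G U : Matrix m n ℂ) (H : Matrix n n ℂ)
    (hH : H.PosSemidef) (hGG : Gᴴ * G = H * H) (hU : (1 - Uᴴ * U).PosSemidef) :
    ((Gᴴ * U).trace).re ≤ (H.trace).re := by
  have h := hH.1
  set V : Matrix n n ℂ := (h.eigenvectorUnitary : Matrix n n ℂ) with hVdef
  have hV : Vᴴ * V = 1 := by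
    simpa [star_eq_conjTranspose] using (Matrix.mem_unitaryGroup_iff').mp h.eigenvectorUnitary.2
  have hV' : V * Vᴴ = 1 := by
    simpa [star_eq_conjTranspose] using (Matrix.mem_unitaryGroup_iff).mp h.eigenvectorUnitary.2
  set e := h.eigenvalues with he
  -- trace H
  have htrH : (H.trace).re = ∑ j, e j := by
    have hspec : H = V * diagonal (RCLike.ofReal ∘ e) * Vᴴ := by
      have := h.spectral_theorem
      rw [Unitary.conjStarAlgAut_apply, star_eq_conjTranspose, ← hVdef] at this
      convert this using 2
    rw [hspec, trace_mul_cycle, hV, Matrix.one_mul, trace_diagonal]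
    simp
  -- trace of Gᴴ U as sum over eigenbasis
  have htr : (Gᴴ * U).trace = ∑ j, star (G *ᵥ (fun i => V i j)) ⬝ᵥ (U *ᵥ (fun i => V i j)) := by
    have h1 : (Gᴴ * U).trace = (Vᴴ * (Gᴴ * U) * V).trace := by
      rw [trace_mul_cycle, hV', Matrix.one_mul]
    rw [h1, Matrix.trace]
    congr 1
    ext j
    rw [Matrix.diag_apply, sandwich_diag, dot_conj_mul]
  rw [htr, Complex.re_sum, htrH]
  apply Finset.sum_le_sum
  intro j _
  have hbv : (fun i => V i j) = ⇑(h.eigenvectorBasis j) :=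
    funext fun i => Matrix.IsHermitian.eigenvectorUnitary_apply h i j
  rw [hbv]
  set b : n → ℂ := ⇑(h.eigenvectorBasis j) with hb
  have hej : (0:ℝ) ≤ e j := hH.eigenvalues_nonneg j
  have hbb : (star b ⬝ᵥ b).re = 1 := by
    have h1 : (star b ⬝ᵥ b).re = ‖h.eigenvectorBasis j‖ ^ 2 := by
      rw [← inner_self_eq_norm_sq (𝕜 := ℂ) (h.eigenvectorBasis j),
        EuclideanSpace.inner_eq_star_dotProduct]
      simp [RCLike.re_to_complex]
      rw [dotProduct_comm]
    rw [h1, h.eigenvectorBasis.orthonormal.1 j, one_pow]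
  have hGb : (star (G *ᵥ b) ⬝ᵥ (G *ᵥ b)).re = (e j) ^ 2 := by
    have h1 : star (G *ᵥ b) ⬝ᵥ (G *ᵥ b) = star (H *ᵥ b) ⬝ᵥ (H *ᵥ b) := by
      rw [← dot_conj_mul, hGG, ← dot_conj_mul, h.eq]
    have hmv : H *ᵥ b = e j • b := h.mulVec_eigenvectorBasis j
    rw [h1, hmv, star_smul, star_trivial, smul_dotProduct, dotProduct_smul,
      Complex.smul_re, Complex.smul_re, hbb]
    simp [smul_eq_mul]
    ring
  have hUb : (star (U *ᵥ b) ⬝ᵥ (U *ᵥ b)).re ≤ 1 := by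
    have h0 := hU.re_dotProduct_nonneg b
    rw [Matrix.sub_mulVec, Matrix.one_mulVec, dotProduct_sub] at h0
    have h0' : (0:ℝ) ≤ (star b ⬝ᵥ b).re - (star b ⬝ᵥ ((Uᴴ * U) *ᵥ b)).re := by
      simpa [RCLike.re_to_complex, Complex.sub_re] using h0
    rw [← dot_conj_mul]
    rw [hbb] at h0'
    linarith
  have hCS : (star (G *ᵥ b) ⬝ᵥ (U *ᵥ b)).re ≤
      Real.sqrt ((star (G *ᵥ b) ⬝ᵥ (G *ᵥ b)).re) * Real.sqrt ((star (U *ᵥ b) ⬝ᵥ (U *ᵥ b)).re) := by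
    set X : EuclideanSpace ℂ m := (WithLp.equiv 2 (m → ℂ)).symm (G *ᵥ b) with hX
    set Y : EuclideanSpace ℂ m := (WithLp.equiv 2 (m → ℂ)).symm (U *ᵥ b) with hY
    have hiXY : (inner ℂ X Y : ℂ) = star (G *ᵥ b) ⬝ᵥ (U *ᵥ b) :=
      (EuclideanSpace.inner_toLp_toLp _ _).trans (dotProduct_comm _ _)
    have hnX : ‖X‖ = Real.sqrt ((star (G *ᵥ b) ⬝ᵥ (G *ᵥ b)).re) := by
      have e : star (G *ᵥ b) ⬝ᵥ (G *ᵥ b) = inner ℂ X X :=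
        ((EuclideanSpace.inner_toLp_toLp _ _).trans (dotProduct_comm _ _)).symm
      rw [e]
      simp only [← RCLike.re_to_complex]
      rw [inner_self_eq_norm_sq (𝕜 := ℂ) X, Real.sqrt_sq (norm_nonneg X)]
    have hnY : ‖Y‖ = Real.sqrt ((star (U *ᵥ b) ⬝ᵥ (U *ᵥ b)).re) := by
      have e : star (U *ᵥ b) ⬝ᵥ (U *ᵥ b) = inner ℂ Y Y :=
        ((EuclideanSpace.inner_toLp_toLp _ _).trans (dotProduct_comm _ _)).symm
      rw [e]
      simp only [← RCLike.re_to_complex]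
      rw [inner_self_eq_norm_sq (𝕜 := ℂ) Y, Real.sqrt_sq (norm_nonneg Y)]
    calc (star (G *ᵥ b) ⬝ᵥ (U *ᵥ b)).re = (inner ℂ X Y : ℂ).re := by rw [hiXY]
      _ ≤ ‖(inner ℂ X Y : ℂ)‖ := Complex.re_le_norm _
      _ ≤ ‖X‖ * ‖Y‖ := norm_inner_le_norm X Y
      _ = _ := by rw [hnX, hnY]
  refine hCS.trans ?_
  rw [hGb, Real.sqrt_sq hej]
  have : Real.sqrt ((star (U *ᵥ b) ⬝ᵥ (U *ᵥ b)).re) ≤ 1 := by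
    have := Real.sqrt_le_sqrt hUb
    simpa using this
  calc e j * Real.sqrt ((star (U *ᵥ b) ⬝ᵥ (U *ᵥ b)).re) ≤ e j * 1 :=
        mul_le_mul_of_nonneg_left this hej
    _ = e j := mul_one _


section Core
variable {m n : Type*} [Fintype m] [Fintype n] [DecidableEq n]

lemma one_sub_proj_posSemidef {Pr : Matrix n n ℂ} (hPr : Prᴴ = Pr) (hPrPr : Pr * Pr = Pr) :
    (1 - Pr).PosSemidef := by
  have h1 : (1 - Pr)ᴴ * (1 - Pr) = 1 - Pr := by
    rw [conjTranspose_sub, conjTranspose_one, hPr, Matrix.sub_mul, Matrix.mul_sub,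
      Matrix.mul_sub, Matrix.one_mul, Matrix.one_mul, Matrix.mul_one, hPrPr]
    abel
  rw [← h1]
  exact posSemidef_conjTranspose_mul_self _

lemma core_bound (C₁ C₂ : Matrix m n ℂ) (R H : Matrix n n ℂ) (hR : R.PosSemidef)
    (hRR : R * R = C₂ᴴ * C₂) (hH : H.PosSemidef) (hHH : H * H = R * (C₁ᴴ * C₁) * R) :
    ((C₁ᴴ * C₂).trace).re ≤ (H.trace).re := by
  obtain ⟨Sp, Pr, hSp, hPr, hSSp, hSpS, hPrS, hSPr, hPrPr⟩ := exists_pinv hR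
  set U : Matrix m n ℂ := C₂ * Sp with hU
  have hC2Pr : C₂ * Pr = C₂ := by
    have hz : C₂ * (1 - Pr) = 0 := by
      rw [← conjTranspose_mul_self_eq_zero]
      have h1 : (1 - Pr)ᴴ = 1 - Pr := by rw [conjTranspose_sub, conjTranspose_one, hPr]
      have h2 : (C₂ * (1 - Pr))ᴴ * (C₂ * (1 - Pr)) = (1 - Pr) * (R * R) * (1 - Pr) := by
        rw [conjTranspose_mul, h1, hRR]
        simp only [Matrix.mul_assoc]
      have h3 : R * (1 - Pr) = 0 := by
        rw [Matrix.mul_sub, Matrix.mul_one, hSPr, sub_self]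
      rw [h2, Matrix.mul_assoc, Matrix.mul_assoc, h3]
      simp
    have hz2 : C₂ - C₂ * Pr = 0 := by
      rw [← hz, Matrix.mul_sub, Matrix.mul_one]
    exact (sub_eq_zero.mp hz2).symm
  have hUR : U * R = C₂ := by rw [hU, Matrix.mul_assoc, hSpS, hC2Pr]
  have hUU : Uᴴ * U = Pr := by
    rw [hU, conjTranspose_mul, hSp]
    calc Sp * C₂ᴴ * (C₂ * Sp) = Sp * (C₂ᴴ * C₂) * Sp := by simp only [Matrix.mul_assoc]
      _ = Sp * (R * R) * Sp := by rw [hRR]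
      _ = (Sp * R) * (R * Sp) := by simp only [Matrix.mul_assoc]
      _ = Pr * Pr := by rw [hSpS, hSSp]
      _ = Pr := hPrPr
  have h1mU : (1 - Uᴴ * U).PosSemidef := by
    rw [hUU]; exact one_sub_proj_posSemidef hPr hPrPr
  have htr : (C₁ᴴ * C₂).trace = ((C₁ * R)ᴴ * U).trace := by
    rw [conjTranspose_mul, hR.1.eq, ← hUR, ← Matrix.mul_assoc, trace_mul_cycle, hU]
  rw [htr]
  refine trace_re_conjTranspose_mul_le (C₁ * R) U H hH ?_ h1mU
  rw [conjTranspose_mul, hR.1.eq, hHH]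
  simp only [Matrix.mul_assoc]
end Core

section Blocks
variable {k l : Type*} [Fintype k] [Fintype l] [DecidableEq k] [DecidableEq l]

lemma blocks_decomp {P : Matrix k k ℂ} {Y : Matrix k l ℂ} {Z : Matrix l k ℂ} {Q : Matrix l l ℂ}
    (hblock : (fromBlocks P Y Z Q).PosSemidef) :
    ∃ (C₁ : Matrix (k ⊕ l) k ℂ) (C₂ : Matrix (k ⊕ l) l ℂ),
      P = C₁ᴴ * C₁ ∧ Y = C₁ᴴ * C₂ ∧ Q = C₂ᴴ * C₂ := by
  obtain ⟨C, hC⟩ := psd_exists_conjTranspose_mul_self hblock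
  refine ⟨C.submatrix id Sum.inl, C.submatrix id Sum.inr, ?_, ?_, ?_⟩
  · ext i j
    have h1 : (fromBlocks P Y Z Q) (Sum.inl i) (Sum.inl j) = (Cᴴ * C) (Sum.inl i) (Sum.inl j) := by
      rw [hC]
    simpa [Matrix.mul_apply, conjTranspose_apply] using h1
  · ext i j
    have h1 : (fromBlocks P Y Z Q) (Sum.inl i) (Sum.inr j) = (Cᴴ * C) (Sum.inl i) (Sum.inr j) := by
      rw [hC]
    simpa [Matrix.mul_apply, conjTranspose_apply] using h1
  · ext i j
    have h1 : (fromBlocks P Y Z Q) (Sum.inr i) (Sum.inr j) = (Cᴴ * C) (Sum.inr i) (Sum.inr j) := by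
      rw [hC]
    simpa [Matrix.mul_apply, conjTranspose_apply] using h1

lemma fromBlocks_zero_psd {K : Matrix l l ℂ} (hK : K.PosSemidef) :
    (fromBlocks (0 : Matrix k k ℂ) (0 : Matrix k l ℂ) (0 : Matrix l k ℂ) K).PosSemidef := by
  obtain ⟨L, hL⟩ := psd_exists_conjTranspose_mul_self hK
  have h1 : fromBlocks (0 : Matrix k k ℂ) 0 0 K
      = (fromBlocks 0 0 0 L)ᴴ * (fromBlocks (0 : Matrix k k ℂ) (0 : Matrix k l ℂ) 0 L) := by
    rw [fromBlocks_conjTranspose, fromBlocks_multiply]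
    simp [hL]
  rw [h1]
  exact posSemidef_conjTranspose_mul_self _
end Blocks

section helpers
variable {d : ℕ} {M : Matrix (Fin d) (Fin d) ℂ}

lemma matSqrt_eq (h : M.PosSemidef) : matSqrt M =
    (h.1.eigenvectorUnitary : Matrix (Fin d) (Fin d) ℂ) *
      diagonal ((↑) ∘ Real.sqrt ∘ h.1.eigenvalues) *
      (star h.1.eigenvectorUnitary : Matrix (Fin d) (Fin d) ℂ) := dif_pos h

lemma matSqrt_posSemidef (h : M.PosSemidef) : (matSqrt M).PosSemidef := by
  rw [matSqrt_eq h]; exact (psd_sqrt_facts h).1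

lemma matSqrt_mul_self (h : M.PosSemidef) : matSqrt M * matSqrt M = M := by
  rw [matSqrt_eq h]; exact (psd_sqrt_facts h).2

lemma matAbs_posSemidef (X : Matrix (Fin d) (Fin d) ℂ) : (matAbs X).PosSemidef :=
  matSqrt_posSemidef (posSemidef_conjTranspose_mul_self X)

lemma matAbs_mul_self (X : Matrix (Fin d) (Fin d) ℂ) : matAbs X * matAbs X = Xᴴ * X :=
  matSqrt_mul_self (posSemidef_conjTranspose_mul_self X)
end helpers

/-- Upper bound: `Re tr Y ≤ F(P, Q)` for a PSD block matrix. -/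
lemma step3 {d : ℕ} (P Y Z Q : Matrix (Fin d) (Fin d) ℂ)
    (hblock : (fromBlocks P Y Z Q).PosSemidef) : (Y.trace).re ≤ matFid P Q := by
  obtain ⟨C₁, C₂, hP, hY, hQ⟩ := blocks_decomp hblock
  have hPps : P.PosSemidef := hP ▸ posSemidef_conjTranspose_mul_self _
  have hQps : Q.PosSemidef := hQ ▸ posSemidef_conjTranspose_mul_self _
  have hRps : (matSqrt Q).PosSemidef := matSqrt_posSemidef hQps
  have hRR : matSqrt Q * matSqrt Q = C₂ᴴ * C₂ := by rw [matSqrt_mul_self hQps, hQ]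
  have hHps : (matAbs (matSqrt P * matSqrt Q)).PosSemidef := matAbs_posSemidef _
  have hHH : matAbs (matSqrt P * matSqrt Q) * matAbs (matSqrt P * matSqrt Q)
      = matSqrt Q * (C₁ᴴ * C₁) * matSqrt Q := by
    rw [matAbs_mul_self, conjTranspose_mul, (matSqrt_posSemidef hPps).1.eq,
      (matSqrt_posSemidef hQps).1.eq, ← hP]
    calc matSqrt Q * matSqrt P * (matSqrt P * matSqrt Q)
        = matSqrt Q * (matSqrt P * matSqrt P) * matSqrt Q := by simp only [Matrix.mul_assoc]
      _ = matSqrt Q * P * matSqrt Q := by rw [matSqrt_mul_self hPps]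
  have := core_bound C₁ C₂ (matSqrt Q) (matAbs (matSqrt P * matSqrt Q)) hRps hRR hHps hHH
  rw [← hY] at this
  exact this


/-- a trace-preserving, 2-positive (blockwise on `2 × 2` blocks) linear map on
`d × d` complex matrices does not decrease the fidelity of density matrices. -/
theorem fidelity_monotone_of_two_positive
    (d : ℕ) (hd : 1 ≤ d)
    (E : Matrix (Fin d) (Fin d) ℂ →ₗ[ℂ] Matrix (Fin d) (Fin d) ℂ)
    (hEtr : ∀ X : Matrix (Fin d) (Fin d) ℂ, (E X).trace = X.trace)
    (h2pos : ∀ a b c e : Matrix (Fin d) (Fin d) ℂ,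
      (Matrix.fromBlocks a b c e).PosSemidef →
      (Matrix.fromBlocks (E a) (E b) (E c) (E e)).PosSemidef)
    (σ ρ : Matrix (Fin d) (Fin d) ℂ) (hσ : σ.PosSemidef) (hσ1 : σ.trace = 1)
    (hρ : ρ.PosSemidef) (hρ1 : ρ.trace = 1) :
    matFid σ ρ ≤ matFid (E σ) (E ρ) := by
  set A := matSqrt σ with hA
  set B := matSqrt ρ with hB
  have hAps : A.PosSemidef := matSqrt_posSemidef hσ
  have hBps : B.PosSemidef := matSqrt_posSemidef hρ
  set M := A * B with hM
  set S := matAbs M with hS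
  have hSps : S.PosSemidef := matAbs_posSemidef M
  have hSS : S * S = Mᴴ * M := matAbs_mul_self M
  obtain ⟨Sp, Pr, hSp, hPr, hSSp, hSpS, hPrS, hSPr, hPrPr⟩ := exists_pinv hSps
  set X := A * (M * Sp) * B with hX
  -- the block matrix [[σ, X],[Xᴴ, ρ]] is PSD
  have hblock : (fromBlocks σ X Xᴴ ρ).PosSemidef := by
    set D : Matrix (Fin d ⊕ Fin d) (Fin d ⊕ Fin d) ℂ := fromBlocks A (M * Sp * B) 0 0 with hD
    have hMSB : (M * Sp * B)ᴴ * (M * Sp * B) = B * Pr * B := by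
      rw [conjTranspose_mul, conjTranspose_mul, hSp, hBps.1.eq]
      calc B * (Sp * Mᴴ) * (M * Sp * B) = B * (Sp * (Mᴴ * M) * Sp) * B := by
            simp only [Matrix.mul_assoc]
        _ = B * (Sp * (S * S) * Sp) * B := by rw [hSS]
        _ = B * ((Sp * S) * (S * Sp)) * B := by simp only [Matrix.mul_assoc]
        _ = B * (Pr * Pr) * B := by rw [hSpS, hSSp]
        _ = B * Pr * B := by rw [hPrPr, Matrix.mul_assoc]
    have hXeq : X = A * (M * Sp * B) := by rw [hX]; simp only [Matrix.mul_assoc]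
    have hDD : Dᴴ * D = fromBlocks σ X Xᴴ (B * Pr * B) := by
      rw [hD, fromBlocks_conjTranspose, fromBlocks_multiply]
      simp only [conjTranspose_zero, Matrix.zero_mul, Matrix.mul_zero, add_zero]
      have e1 : Aᴴ * A = σ := by rw [hAps.1.eq, hA, matSqrt_mul_self hσ]
      have e2 : Aᴴ * (M * Sp * B) = X := by rw [hAps.1.eq, ← hXeq]
      have e3 : (M * Sp * B)ᴴ * A = Xᴴ := by
        rw [hXeq, Matrix.conjTranspose_mul A (M * Sp * B), hAps.1.eq]
      rw [e1, e2, e3, hMSB]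
    have h1mPr : (1 - Pr).PosSemidef := one_sub_proj_posSemidef hPr hPrPr
    have hKps : (B * (1 - Pr) * B).PosSemidef := by
      have := h1mPr.conjTranspose_mul_mul_same B
      rwa [hBps.1.eq] at this
    have hsum : fromBlocks σ X Xᴴ ρ = Dᴴ * D + fromBlocks 0 0 0 (B * (1 - Pr) * B) := by
      rw [hDD, fromBlocks_add]
      have e4 : B * Pr * B + B * (1 - Pr) * B = ρ := by
        rw [← Matrix.add_mul, ← Matrix.mul_add, add_sub_cancel, Matrix.mul_one, hB,
          matSqrt_mul_self hρ]
      rw [e4]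
      simp
    rw [hsum]
    exact (posSemidef_conjTranspose_mul_self D).add (fromBlocks_zero_psd hKps)
  have htrX : X.trace = S.trace := by
    rw [hX, trace_mul_cycle]
    have hBA : B * A = Mᴴ := by rw [hM, conjTranspose_mul, hAps.1.eq, hBps.1.eq]
    rw [hBA, ← Matrix.mul_assoc, ← hSS, Matrix.mul_assoc, hSSp, hSPr]
  have hEblock := h2pos σ X Xᴴ ρ hblock
  have hstep := step3 (E σ) (E X) (E Xᴴ) (E ρ) hEblock
  have htrEX : (E X).trace = S.trace := by rw [hEtr, htrX]
  have hfid : matFid σ ρ = ((E X).trace).re := by rw [htrEX]; rfl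
  rw [hfid]
  exact hstep
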